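/- Let f(x) = x^2 + c with c rational. f has a rational point of exact period 2 if and only if c = -3/4 - σ^2 for some nonzero rational σ; in that case x = -1/2 + σ and x' = -1/2 - σ satisfy f(x) = x', f(x') = x, and x ≠ x'. -/
import Mathlib


theorem rational_period_two (c : ℚ) (f : ℚ → ℚ) (hf : ∀ x, f x = x^2 + c) :
    ((∃ x : ℚ, f (f x) = x ∧ f x ≠ x) ↔ ∃ σ : ℚ, σ ≠ 0 ∧ c = -3/4 - σ^2) ∧
    (∀ σ : ℚ, σ ≠ 0 → c = -3/4 - σ^2 →
      f (-1/2 + σ) = -1/2 - σ ∧ f (-1/2 - σ) = -1/2 + σ ∧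
      (-1/2 + σ : ℚ) ≠ -1/2 - σ) := by
  constructor
  · constructor
    · rintro ⟨x, h, hne⟩
      rw [hf, hf] at h
      rw [hf] at hne
      refine ⟨x + 1/2, ?_, ?_⟩
      · intro h0
        apply hne
        have hx : x = -1/2 := by linarith [h0]
        rw [hx] at h ⊢
        nlinarith [h]
      · have hfac : (x^2 - x + c) * (x^2 + x + c + 1) = 0 := by nlinarith [h]
        have h1 : x^2 - x + c ≠ 0 := fun h1 => hne (by linarith)
        have h2 : x^2 + x + c + 1 = 0 := by
          rcases mul_eq_zero.mp hfac with h' | h'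
          · exact absurd h' h1
          · exact h'
        ring_nf
        nlinarith [h2]
    · rintro ⟨σ, hσ, hc⟩
      refine ⟨-1/2 + σ, ?_, ?_⟩
      · rw [hf, hf, hc]; ring
      · rw [hf, hc]
        intro h
        apply hσ
        nlinarith [h]
  · intro σ hσ hc
    refine ⟨by rw [hf, hc]; ring, by rw [hf, hc]; ring, fun h => hσ (by linarith)⟩
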